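/- Commutation of joint and conditional embeddings: let R be a k×l row-stochastic partition matrix with partition indicator matrix R̄, Q a collection of m×n row-stochastic partition matrices, ρ ∈ Δ_{k-1}°, ρ' = ρR, and K a k×m row-stochastic matrix. Then ψ_{ρ'}(R̄^T(K ⊗ Q)) = R^T(ψ_ρ(K) ⊗ Q), i.e., the diagram with f(P) = R^T(P⊗Q) and f̄(K) = R̄^T(K⊗Q) commutes: ψ_{ρ'} ∘ f̄ = f ∘ ψ_ρ. -/

import Mathlib

/-- Commutation of joint and conditional embeddings. Let `R` be a
`k × l` row-stochastic partition matrix with partition `part : Fin l → Fin k` and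
indicator matrix `R̄_{as} = [part s = a]`, let `Q⁽ᵃ⁾` be `m × n` row-stochastic
partition matrices, `ρ ∈ Δ_{k-1}°`, `ρ' = ρR`, and `K` a `k × m` row-stochastic
matrix. Then `ψ_{ρ'}(R̄ᵀ(K ⊗ Q)) = Rᵀ(ψ_ρ(K) ⊗ Q)`, where `ψ_ρ(K)_{xy} = ρ(x)K_{xy}`
and `(P ⊗ Q)_{ab} = (P·Q⁽ᵃ⁾)_{ab}`. -/
theorem joint_conditional_embedding_commute {k l m n : ℕ}
    (R : Matrix (Fin k) (Fin l) ℝ) (part : Fin l → Fin k)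
    (hR0 : ∀ a s, 0 ≤ R a s)
    (hRsupp : ∀ a s, R a s ≠ 0 → part s = a)
    (hRsum : ∀ a : Fin k,
      ∑ s ∈ Finset.univ.filter (fun s => part s = a), R a s = 1)
    (Q : Fin k → Matrix (Fin m) (Fin n) ℝ)
    (colpart : Fin k → Fin n → Fin m)
    (hQ0 : ∀ a b t, 0 ≤ Q a b t)
    (hQsupp : ∀ a b t, Q a b t ≠ 0 → colpart a t = b)
    (hQsum : ∀ a (b : Fin m),
      ∑ t ∈ Finset.univ.filter (fun t => colpart a t = b), Q a b t = 1)
    (ρ : Fin k → ℝ) (hρ : ∀ a, 0 < ρ a) (hρ1 : ∑ a, ρ a = 1)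
    (K : Matrix (Fin k) (Fin m) ℝ)
    (hK0 : ∀ a b, 0 ≤ K a b) (hKrow : ∀ a, ∑ b, K a b = 1) :
    ∀ (s : Fin l) (t : Fin n),
      (∑ a, ρ a * R a s)
          * (∑ a, (if part s = a then (1 : ℝ) else 0) * ∑ b, K a b * Q a b t)
        = ∑ a, R a s * ∑ b, (ρ a * K a b) * Q a b t := by
  intro s t
  have hz : ∀ a, a ≠ part s → R a s = 0 := by
    intro a ha
    by_contra h
    exact ha (hRsupp a s h).symm
  have h1 : (∑ a, ρ a * R a s) = ρ (part s) * R (part s) s :=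
    Finset.sum_eq_single _ (fun a _ ha => by rw [hz a ha, mul_zero])
      (fun h => absurd (Finset.mem_univ _) h)
  have h2 : (∑ a, (if part s = a then (1 : ℝ) else 0) * ∑ b, K a b * Q a b t)
      = ∑ b, K (part s) b * Q (part s) b t := by
    rw [Finset.sum_eq_single (part s)
      (fun a _ ha => by rw [if_neg (fun h => ha h.symm), zero_mul])
      (fun h => absurd (Finset.mem_univ _) h), if_pos rfl, one_mul]
  have h3 : (∑ a, R a s * ∑ b, (ρ a * K a b) * Q a b t)
      = R (part s) s * ∑ b, (ρ (part s) * K (part s) b) * Q (part s) b t :=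
    Finset.sum_eq_single _ (fun a _ ha => by rw [hz a ha, zero_mul])
      (fun h => absurd (Finset.mem_univ _) h)
  rw [h1, h2, h3, Finset.mul_sum, Finset.mul_sum]
  ring_nf
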